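/- Let p be an odd prime and λ ∈ F_p with λ ∉ {0,1}. Then ₂F₁(phi, phi; ε | λ) = phi(-1) · ₂F₁(phi, phi; ε | 1-λ), where ₂F₁ is Greene's hypergeometric series and phi the quadratic character. -/

import Mathlib

open Finset
noncomputable def phiChar (p : ℕ) [Fact p.Prime] : MulChar (ZMod p) ℂ :=
  (quadraticChar (ZMod p)).ringHomComp (Int.castRingHom ℂ)


noncomputable def gbinom {p : ℕ} [Fact p.Prime] (A B : MulChar (ZMod p) ℂ) : ℂ :=
  (B (-1) / p) * jacobiSum A B⁻¹

noncomputable def twoF1 {p : ℕ} [Fact p.Prime] (A B C : MulChar (ZMod p) ℂ) (x : ZMod p) : ℂ :=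
  ((p : ℂ) / (p - 1)) * ∑ χ : MulChar (ZMod p) ℂ, gbinom (A * χ) χ * gbinom (B * χ) (C * χ) * χ x

section aux
variable (p : ℕ) [Fact p.Prime]

lemma phi_zero : phiChar p 0 = 0 := by
  have : Nontrivial (ZMod p) := ZMod.nontrivial_iff.mpr (Fact.out : p.Prime).ne_one
  exact MulChar.map_zero _

lemma phi_sq {a : ZMod p} (ha : a ≠ 0) : phiChar p a * phiChar p a = 1 := by
  have h := quadraticChar_sq_one (F := ZMod p) ha
  unfold phiChar
  simp only [MulChar.ringHomComp_apply]
  rw [← map_mul, ← sq, h]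
  norm_num

lemma phi_inv (a : ZMod p) : phiChar p a⁻¹ = phiChar p a := by
  rcases eq_or_ne a 0 with rfl | ha
  · simp
  · calc phiChar p a⁻¹ = phiChar p a⁻¹ * (phiChar p a * phiChar p a) := by
          rw [phi_sq p ha, mul_one]
      _ = phiChar p (a⁻¹ * a) * phiChar p a := by rw [map_mul]; ring
      _ = phiChar p a := by rw [inv_mul_cancel₀ ha, map_one, one_mul]

lemma phi_sq_mul {a : ZMod p} (b : ZMod p) (ha : a ≠ 0) :
    phiChar p (a * a * b) = phiChar p b := by
  rw [map_mul, map_mul, phi_sq p ha, one_mul]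

lemma phi_neg (a : ZMod p) : phiChar p (-a) = phiChar p (-1) * phiChar p a := by
  rw [← map_mul, neg_one_mul]

end aux

section symm
variable (p : ℕ) [Fact p.Prime]

lemma S_eq_T (μ : ZMod p) :
    ∑ x : ZMod p, phiChar p (x * (1 - x) * (1 - μ * x)) =
      ∑ x : ZMod p, phiChar p (x * (x - 1) * (x - μ)) := by
  let e : ZMod p ≃ ZMod p := ⟨fun x => x⁻¹, fun x => x⁻¹, fun x => inv_inv x, fun x => inv_inv x⟩
  rw [← Equiv.sum_comp e (fun x => phiChar p (x * (1 - x) * (1 - μ * x)))]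
  refine Finset.sum_congr rfl fun x _ => ?_
  show phiChar p (x⁻¹ * (1 - x⁻¹) * (1 - μ * x⁻¹)) = phiChar p (x * (x - 1) * (x - μ))
  rcases eq_or_ne x 0 with rfl | hx
  · simp [phi_zero]
  · have harg : x⁻¹ * (1 - x⁻¹) * (1 - μ * x⁻¹) = ((x⁻¹ * x⁻¹) * (x⁻¹ * x⁻¹)) * (x * (x - 1) * (x - μ)) := by
      field_simp
    rw [harg, phi_sq_mul p _ (mul_ne_zero (inv_ne_zero hx) (inv_ne_zero hx))]

lemma T_symm (μ : ZMod p) :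
    ∑ x : ZMod p, phiChar p (x * (x - 1) * (x - μ)) =
      phiChar p (-1) * ∑ x : ZMod p, phiChar p (x * (x - 1) * (x - (1 - μ))) := by
  rw [← (Equiv.subLeft (1 : ZMod p)).sum_comp
    (fun x => phiChar p (x * (x - 1) * (x - μ)))]
  rw [Finset.mul_sum]
  refine Finset.sum_congr rfl fun x _ => ?_
  show phiChar p ((1 - x) * ((1 - x) - 1) * ((1 - x) - μ)) = _
  have harg : (1 - x) * ((1 - x) - 1) * ((1 - x) - μ) = -(x * (x - 1) * (x - (1 - μ))) := by
    ring
  rw [harg, phi_neg]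

lemma S_symm (μ : ZMod p) :
    ∑ x : ZMod p, phiChar p (x * (1 - x) * (1 - μ * x)) =
      phiChar p (-1) * ∑ x : ZMod p, phiChar p (x * (1 - x) * (1 - (1 - μ) * x)) := by
  rw [S_eq_T, T_symm, S_eq_T]

end symm

section reduce
variable (p : ℕ) [Fact p.Prime]

lemma sum_chars (t : ZMod p) :
    ∑ χ : MulChar (ZMod p) ℂ, χ t = if t = 1 then ((p - 1 : ℕ) : ℂ) else 0 := by
  have : NeZero p := ⟨(Fact.out : p.Prime).ne_zero⟩
  have h := DirichletCharacter.sum_characters_eq (R := ℂ) (n := p) t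
  rw [Nat.totient_prime Fact.out] at h
  exact h

lemma inner_y (lam x : ZMod p) (hlam : lam ≠ 0) :
    ∑ y : ZMod p, phiChar p x * phiChar p y *
        (if x * (1 - x)⁻¹ * y * (1 - y)⁻¹ * lam = 1 then ((p - 1 : ℕ) : ℂ) else 0) =
      ((p - 1 : ℕ) : ℂ) * phiChar p (x * (1 - x) * (1 - (1 - lam) * x)) := by
  have : Nontrivial (ZMod p) := ZMod.nontrivial_iff.mpr (Fact.out : p.Prime).ne_one
  by_cases hx : x = 0
  · subst hx
    simp [phi_zero, zero_ne_one]
  by_cases hx1 : x = 1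
  · subst hx1
    simp [phi_zero, zero_ne_one]
  have h1x : (1 : ZMod p) - x ≠ 0 := sub_ne_zero.mpr (Ne.symm hx1)
  set d : ZMod p := 1 - (1 - lam) * x with hd_def
  by_cases hd : d = 0
  · -- no solutions; RHS is zero
    have hRHS : phiChar p (x * (1 - x) * d) = 0 := by rw [hd, mul_zero, phi_zero]
    rw [hRHS, mul_zero]
    refine Finset.sum_eq_zero fun y _ => ?_
    have hcond : ¬ (x * (1 - x)⁻¹ * y * (1 - y)⁻¹ * lam = 1) := by
      intro h
      by_cases hy : y = 0
      · simp [hy] at h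
      by_cases hy1 : y = 1
      · simp [hy1] at h
      have h1y : (1 : ZMod p) - y ≠ 0 := sub_ne_zero.mpr (Ne.symm hy1)
      -- from hd : 1 - (1-lam)*x = 0, we get 1 - x = -(lam*x)
      have hx' : (1 : ZMod p) - x = -(lam * x) := by
        have : (1 : ZMod p) - (1 - lam) * x = 0 := hd
        linear_combination this
      rw [hx'] at h
      have hlx : lam * x ≠ 0 := mul_ne_zero hlam hx
      field_simp at h
      exact hlx (by linear_combination (-(lam * x)) * h)
    rw [if_neg hcond, mul_zero]
  · -- unique solution y₀
    set y₀ : ZMod p := (1 - x) * d⁻¹ with hy₀_def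
    have hy₀ : y₀ ≠ 0 := mul_ne_zero h1x (inv_ne_zero hd)
    have h1y₀ : (1 : ZMod p) - y₀ = lam * x * d⁻¹ := by
      field_simp [hy₀_def]
      rw [sub_mul, mul_assoc, inv_mul_cancel₀ hd, mul_one, hd_def]
      ring
    have key : ∀ y : ZMod p, x * (1 - x)⁻¹ * y * (1 - y)⁻¹ * lam = 1 ↔ y = y₀ := by
      intro y
      constructor
      · intro h
        by_cases hy : y = 0
        · simp [hy] at h
        by_cases hy1 : y = 1
        · simp [hy1] at h
        have h1y : (1 : ZMod p) - y ≠ 0 := sub_ne_zero.mpr (Ne.symm hy1)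
        field_simp at h
        -- h : x * y * lam = (1-x) * (1-y)  (in some form)
        have hyd : y * d = 1 - x := by rw [hd_def]; linear_combination h
        rw [hy₀_def, ← hyd]
        field_simp
      · rintro rfl
        have h1y0 : (1 : ZMod p) - y₀ ≠ 0 := by
          rw [h1y₀]; exact mul_ne_zero (mul_ne_zero hlam hx) (inv_ne_zero hd)
        rw [h1y₀, hy₀_def]
        calc x * (1 - x)⁻¹ * ((1 - x) * d⁻¹) * (lam * x * d⁻¹)⁻¹ * lam
            = ((1 - x)⁻¹ * (1 - x)) * ((lam * x) * (lam * x)⁻¹) * (d⁻¹ * (d⁻¹)⁻¹) := by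
              ring
          _ = 1 := by
              rw [inv_mul_cancel₀ h1x, mul_inv_cancel₀ (mul_ne_zero hlam hx),
                mul_inv_cancel₀ (inv_ne_zero hd), one_mul, one_mul]
    simp only [key, mul_ite, mul_zero]
    rw [Finset.sum_ite_eq' Finset.univ y₀ (fun y => phiChar p x * phiChar p y * ((p - 1 : ℕ) : ℂ))]
    simp only [Finset.mem_univ, if_true]
    rw [hy₀_def, map_mul, map_mul, map_mul, phi_inv]
    ring

end reduce

section lemA
variable (p : ℕ) [Fact p.Prime]

lemma lemA (lam : ZMod p) (hlam : lam ≠ 0) :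
    twoF1 (phiChar p) (phiChar p) 1 lam =
      (∑ x : ZMod p, phiChar p (x * (1 - x) * (1 - (1 - lam) * x))) / p := by
  have hpp : p.Prime := Fact.out
  have hp0 : (p : ℂ) ≠ 0 := Nat.cast_ne_zero.mpr hpp.ne_zero
  have hp1 : (p : ℂ) - 1 ≠ 0 := by
    intro h
    have h' : (p : ℂ) = 1 := sub_eq_zero.mp h
    exact hpp.one_lt.ne' (Nat.cast_eq_one.mp h')
  unfold twoF1 gbinom
  simp only [one_mul]
  have step1 : ∀ χ : MulChar (ZMod p) ℂ,
      (χ (-1) / p * jacobiSum (phiChar p * χ) χ⁻¹) *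
          (χ (-1) / p * jacobiSum (phiChar p * χ) χ⁻¹) * χ lam =
        (1 / (p : ℂ) ^ 2) * ∑ x : ZMod p, ∑ y : ZMod p,
          phiChar p x * phiChar p y * χ (x * (1 - x)⁻¹ * y * (1 - y)⁻¹ * lam) := by
    intro χ
    have hm : χ (-1) * χ (-1) = 1 := by
      rw [← map_mul]
      norm_num
    have hJ : jacobiSum (phiChar p * χ) χ⁻¹ * jacobiSum (phiChar p * χ) χ⁻¹ * χ lam =
        ∑ x : ZMod p, ∑ y : ZMod p,
          phiChar p x * phiChar p y * χ (x * (1 - x)⁻¹ * y * (1 - y)⁻¹ * lam) := by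
      simp only [jacobiSum]
      rw [Finset.sum_mul_sum, Finset.sum_mul]
      refine Finset.sum_congr rfl fun x _ => ?_
      rw [Finset.sum_mul]
      refine Finset.sum_congr rfl fun y _ => ?_
      simp only [MulChar.mul_apply, MulChar.inv_apply', map_mul]
      ring
    calc (χ (-1) / p * jacobiSum (phiChar p * χ) χ⁻¹) *
          (χ (-1) / p * jacobiSum (phiChar p * χ) χ⁻¹) * χ lam
        = (χ (-1) * χ (-1)) * ((1 / (p : ℂ) ^ 2) *
            (jacobiSum (phiChar p * χ) χ⁻¹ * jacobiSum (phiChar p * χ) χ⁻¹ * χ lam)) := by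
          ring
      _ = _ := by rw [hm, one_mul, hJ]
  rw [Finset.sum_congr rfl fun χ _ => step1 χ, ← Finset.mul_sum, Finset.sum_comm]
  have step2 : ∀ x : ZMod p, (∑ χ : MulChar (ZMod p) ℂ, ∑ y : ZMod p,
      phiChar p x * phiChar p y * χ (x * (1 - x)⁻¹ * y * (1 - y)⁻¹ * lam)) =
      ((p - 1 : ℕ) : ℂ) * phiChar p (x * (1 - x) * (1 - (1 - lam) * x)) := by
    intro x
    rw [Finset.sum_comm]
    rw [← inner_y p lam x hlam]
    refine Finset.sum_congr rfl fun y _ => ?_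
    rw [← Finset.mul_sum, sum_chars]
  rw [Finset.sum_congr rfl fun x _ => step2 x, ← Finset.mul_sum]
  have hcast : ((p - 1 : ℕ) : ℂ) = (p : ℂ) - 1 := by
    have := hpp.one_lt.le
    push_cast [Nat.cast_sub this]
    ring
  rw [hcast]
  field_simp
  ring_nf
  exact Finset.sum_congr rfl fun x _ => congrArg _ (by ring)

end lemA

theorem stmt_13 (p : ℕ) [Fact p.Prime] (hp : p ≠ 2) (lam : ZMod p) (h0 : lam ≠ 0)
    (h1 : lam ≠ 1) :
    twoF1 (phiChar p) (phiChar p) 1 lam =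
      phiChar p (-1) * twoF1 (phiChar p) (phiChar p) 1 (1 - lam) := by
  rw [lemA p lam h0, lemA p (1 - lam) (sub_ne_zero.mpr (Ne.symm h1)), sub_sub_cancel,
    S_symm p (1 - lam), sub_sub_cancel, mul_div_assoc]
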